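/- The only generalized Mersenne numbers M_{5,n} = 5ⁿ − 4 (n a positive integer) that are perfect squares are 1 and 121, attained at n = 1 and n = 3. -/
import Mathlib

/-- Base cases for the entry point of 25 in the Fibonacci sequence. -/
lemma fib25_base : ∀ j < 101, 25 ∣ Nat.fib j → 25 ∣ j := by decide

/-- The Fibonacci sequence mod 25 is periodic with period 100 (from index 1 on). -/
lemma fib_mod25 (m : ℕ) : Nat.fib (m + 101) % 25 = Nat.fib (m + 1) % 25 := by
  have h := Nat.fib_add m 100
  have h100 : Nat.fib 100 % 25 = 0 := by decide
  have h101 : Nat.fib 101 % 25 = 1 := by decide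
  have e : m + 100 + 1 = m + 101 := by omega
  have e2 : (100 : ℕ) + 1 = 101 := by norm_num
  rw [e, e2] at h
  rw [h, Nat.add_mod, Nat.mul_mod, Nat.mul_mod (Nat.fib (m+1)), h100, h101]
  simp [Nat.mod_mod]

/-- Entry point: if 25 divides `fib j` then 25 divides `j`. -/
lemma fib25 : ∀ j, 25 ∣ Nat.fib j → 25 ∣ j := by
  intro j
  induction j using Nat.strong_induction_on with
  | _ j ih =>
    intro hdvd
    by_cases hj : j < 101
    · exact fib25_base j hj hdvd
    · have e : j = (j - 101) + 101 := by omega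
      have h := fib_mod25 (j - 101)
      rw [← e] at h
      have : 25 ∣ Nat.fib (j - 101 + 1) := by omega
      have h2 := ih (j - 101 + 1) (by omega) this
      omega

/-- An odd-indexed Fibonacci number that is a power of 5 must be 1 or 5. -/
lemma fib_pow5 (k m : ℕ) (h : Nat.fib (2*k+1) = 5 ^ m) : m ≤ 1 := by
  by_contra hm
  push_neg at hm
  have h25 : 25 ∣ Nat.fib (2*k+1) := by
    rw [h]
    have : (5:ℕ)^2 ∣ 5^m := pow_dvd_pow 5 (by omega)
    simpa using this
  have hj := fib25 _ h25
  have hd : Nat.fib 25 ∣ Nat.fib (2*k+1) := Nat.fib_dvd 25 _ hj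
  have hf : Nat.fib 25 = 75025 := by decide
  rw [hf, h] at hd
  have h3001 : (3001:ℕ) ∣ 5 ^ m := dvd_trans ⟨25, by norm_num⟩ hd
  have hp : Nat.Prime 3001 := by norm_num
  have := hp.dvd_of_dvd_pow h3001
  omega

/-- Every positive solution of `x² + 4 = 5 y²` has `y` an odd-indexed Fibonacci
number (and `x` the corresponding Lucas number).  Proved by descent with the
unit `(3 - √5)/2`. -/
lemma descent : ∀ y x : ℕ, x * x + 4 = 5 * (y * y) →
    ∃ k, y = Nat.fib (2*k+1) ∧ x = Nat.fib (2*k) + Nat.fib (2*k+2) := by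
  intro y
  induction y using Nat.strong_induction_on with
  | _ y ih =>
    intro x hx
    rcases Nat.lt_or_ge y 2 with hy | hy
    · interval_cases y
      · exfalso; omega
      · have hx1 : x = 1 := by nlinarith
        exact ⟨0, by simp [hx1]⟩
    · have hxy : y < x := by nlinarith
      have hx3y : x < 3 * y := by nlinarith
      have h5y : 5 * y < 3 * x := by nlinarith
      have hxp : x * x % 2 = x % 2 := by
        rcases Nat.even_or_odd x with ⟨a, rfl⟩ | ⟨a, rfl⟩
        · have : (a+a)*(a+a) = 2*(2*(a*a)) := by ring
          omega
        · have : (2*a+1)*(2*a+1) = 2*(2*(a*a)+2*a)+1 := by ring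
          omega
      have hyp : y * y % 2 = y % 2 := by
        rcases Nat.even_or_odd y with ⟨a, rfl⟩ | ⟨a, rfl⟩
        · have : (a+a)*(a+a) = 2*(2*(a*a)) := by ring
          omega
        · have : (2*a+1)*(2*a+1) = 2*(2*(a*a)+2*a)+1 := by ring
          omega
      have hpar : x % 2 = y % 2 := by omega
      obtain ⟨x', hx'⟩ : ∃ x', 3 * x = 5 * y + 2 * x' := ⟨(3*x - 5*y)/2, by omega⟩
      obtain ⟨y', hy'⟩ : ∃ y', 3 * y = x + 2 * y' := ⟨(3*y - x)/2, by omega⟩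
      have hnew : x' * x' + 4 = 5 * (y' * y') := by
        have hZ : 4 * ((x':ℤ) * x' + 4) = 4 * (5 * (y' * y')) := by
          have hxZ : (x:ℤ) * x + 4 = 5 * (y * y) := by exact_mod_cast hx
          have hx'Z : 3 * (x:ℤ) = 5 * y + 2 * x' := by exact_mod_cast hx'
          have hy'Z : 3 * (y:ℤ) = x + 2 * y' := by exact_mod_cast hy'
          linear_combination (-(3*(x:ℤ) - 5*y + 2*x')) * hx'Z + (5*(3*(y:ℤ) - x + 2*y')) * hy'Z + 4 * hxZ
        have := mul_left_cancel₀ (by norm_num : (4:ℤ) ≠ 0) hZ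
        exact_mod_cast this
      have hlt : y' < y := by omega
      obtain ⟨k, hk1, hk2⟩ := ih y' hlt x' hnew
      have f2 := Nat.fib_add_two (n := 2*k)
      have f3 := Nat.fib_add_two (n := 2*k+1)
      have f4 := Nat.fib_add_two (n := 2*k+2)
      refine ⟨k + 1, ?_, ?_⟩ <;>
      · ring_nf at f2 f3 f4 hk1 hk2 ⊢
        omega

theorem stmt12 (n : ℕ) (hn : 0 < n) :
    IsSquare (5 ^ n - 4) ↔ n = 1 ∨ n = 3 := by
  constructor
  · rintro ⟨r, hr⟩
    have h5 : 5 ≤ 5 ^ n := Nat.le_self_pow hn.ne' 5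
    have hr' : r * r + 4 = 5 ^ n := by omega
    rcases Nat.even_or_odd n with ⟨m, hm⟩ | ⟨m, hm⟩
    · exfalso
      subst hm
      have hm1 : 1 ≤ m := by omega
      have hs : 5 ^ (m + m) = 5 ^ m * 5 ^ m := by rw [← pow_add]
      set s := 5 ^ m with hsdef
      have hs5 : 5 ≤ s := Nat.le_self_pow (by omega) 5
      rw [hs] at hr'
      have hrs : r < s := by nlinarith
      have hd : (s - r) * (s + r) = 4 := by
        zify [hrs.le]
        have hZ : (r:ℤ) * r + 4 = s * s := by exact_mod_cast hr'
        linear_combination (-1 : ℤ) * hZ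
      have h44 : s + r ≤ 4 := Nat.le_of_dvd (by norm_num) ⟨s - r, by rw [← hd]; ring⟩
      omega
    · subst hm
      have hs : 5 ^ (2*m+1) = 5 * (5 ^ m * 5 ^ m) := by
        rw [pow_succ, ← pow_add]; ring
      rw [hs] at hr'
      obtain ⟨k, hk, -⟩ := descent (5 ^ m) r hr'
      have hm1 : m ≤ 1 := fib_pow5 k m hk.symm
      interval_cases m
      · left; rfl
      · right; rfl
  · rintro (rfl | rfl)
    · exact ⟨1, by norm_num⟩
    · exact ⟨11, by norm_num⟩
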